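/- For every k ≥ 1 and all distinct stems σ, τ ∈ Σ_k, the operators T_σ and T_τ on ℓ²(P) have orthogonal ranges: (T_σ)* T_τ = 0. -/

import Mathlib

open scoped Classical

namespace BSpaper

/-- The single Baumslag–Solitar relator `a * b^c * (b^d * a)⁻¹` on two generators
(`true` plays the role of `a`, `false` the role of `b`). -/
def rels (c d : ℕ) : Set (FreeGroup Bool) :=
  {FreeGroup.of true * FreeGroup.of false ^ c * (FreeGroup.of false ^ d * FreeGroup.of true)⁻¹}

/-- The Baumslag–Solitar group `BS(c,d) = ⟨a, b ∣ a b^c = b^d a⟩`. -/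
abbrev Grp (c d : ℕ) := PresentedGroup (rels c d)

variable (c d : ℕ)

/-- The generator `a`. -/
def a : Grp c d := PresentedGroup.of true

/-- The generator `b`. -/
def b : Grp c d := PresentedGroup.of false

/-- The submonoid `P` of `BS(c,d)` generated by `a` and `b`. -/
def P : Submonoid (Grp c d) := Submonoid.closure {a c d, b c d}

/-- The word `b^{s₀} a b^{s₁} a ⋯ b^{s_{k-1}} a` associated to a list of digits `s_i < d`. -/
def wordStem : List (Fin d) → Grp c d
  | [] => 1
  | i :: l => b c d ^ (i : ℕ) * a c d * wordStem l

/-- `Σ_k`: the set of stems of height `k`. -/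
def SigmaSet (k : ℕ) : Set (Grp c d) :=
  {g | ∃ l : List (Fin d), l.length = k ∧ wordStem c d l = g}

/-- The data `(l, t)` of a normal-form decomposition `x = (b^{s₀} a ⋯ b^{s_{k-1}} a) * b^t`,
chosen by choice when it exists (it exists, uniquely, for every `x ∈ P`). -/
noncomputable def nf (x : Grp c d) : List (Fin d) × ℕ :=
  if h : ∃ p : List (Fin d) × ℕ, x = wordStem c d p.1 * b c d ^ p.2 then h.choose else ([], 0)

/-- The stem of `x`, i.e. the stem part of the normal form of `x`. -/
noncomputable def stem (x : Grp c d) : Grp c d := wordStem c d (nf c d x).1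

/-- The left-invariant partial order on `BS(c,d)`: `g ≤ h` iff `g⁻¹ * h ∈ P`. -/
def bsLe (g h : Grp c d) : Prop := g⁻¹ * h ∈ P c d

lemma a_mem_P : a c d ∈ P c d := Submonoid.subset_closure (Set.mem_insert _ _)

lemma b_mem_P : b c d ∈ P c d :=
  Submonoid.subset_closure (Set.mem_insert_of_mem _ rfl)

lemma wordStem_mem_P (l : List (Fin d)) : wordStem c d l ∈ P c d := by
  induction l with
  | nil => exact one_mem _
  | cons i l ih =>
      exact mul_mem (mul_mem (pow_mem (b_mem_P c d) _) (a_mem_P c d)) ih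

/-- `a` as an element of the submonoid `P`. -/
def aP : P c d := ⟨a c d, a_mem_P c d⟩

/-- `b` as an element of the submonoid `P`. -/
def bP : P c d := ⟨b c d, b_mem_P c d⟩

noncomputable abbrev l2P := lp (fun _ : P c d => ℂ) 2

/-! ### Auxiliary: HNN model of `BS(c,d)` -/

open Multiplicative

/-- Subgroup of `Multiplicative ℤ` of multiples of `e`. -/
def dvdSubgroup (e : ℕ) : Subgroup (Multiplicative ℤ) where
  carrier := {x | (e : ℤ) ∣ x.toAdd}
  one_mem' := dvd_zero _
  mul_mem' := fun hx hy => dvd_add hx hy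
  inv_mem' := fun hx => (dvd_neg).2 hx

lemma mem_dvdSubgroup (e : ℕ) (x : Multiplicative ℤ) :
    x ∈ dvdSubgroup e ↔ (e : ℤ) ∣ x.toAdd := Iff.rfl

/-- The isomorphism `cℤ ≃ dℤ` sending `c` to `d`. -/
def bsEquiv (hc : 0 < c) (hd : 0 < d) : dvdSubgroup c ≃* dvdSubgroup d where
  toFun x := ⟨ofAdd ((d : ℤ) * ((toAdd x.1) / c)), dvd_mul_right _ _⟩
  invFun y := ⟨ofAdd ((c : ℤ) * ((toAdd y.1) / d)), dvd_mul_right _ _⟩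
  left_inv := fun ⟨x, hx⟩ => by
    ext
    simp only [toAdd_ofAdd]
    rw [Int.mul_ediv_cancel_left _ (by exact_mod_cast hd.ne' : (d:ℤ) ≠ 0),
      Int.mul_ediv_cancel' hx]
  right_inv := fun ⟨y, hy⟩ => by
    ext
    simp only [toAdd_ofAdd]
    rw [Int.mul_ediv_cancel_left _ (by exact_mod_cast hc.ne' : (c:ℤ) ≠ 0),
      Int.mul_ediv_cancel' hy]
  map_mul' := fun ⟨x, hx⟩ ⟨y, hy⟩ => by
    ext
    show ofAdd ((d:ℤ) * ((toAdd (x * y)) / c))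
        = ofAdd ((d:ℤ) * (toAdd x / c)) * ofAdd ((d:ℤ) * (toAdd y / c))
    rw [← ofAdd_add]
    congr 1
    rw [toAdd_mul, Int.add_ediv_of_dvd_left hx, mul_add]

lemma bsEquiv_apply (hc : 0 < c) (hd : 0 < d) (q : ℤ) :
    (bsEquiv c d hc hd ⟨ofAdd ((c:ℤ) * q), dvd_mul_right _ _⟩ : Multiplicative ℤ)
      = ofAdd ((d:ℤ) * q) := by
  show ofAdd ((d:ℤ) * ((toAdd (ofAdd ((c:ℤ) * q))) / c)) = _
  rw [toAdd_ofAdd, Int.mul_ediv_cancel_left _ (by exact_mod_cast hc.ne' : (c:ℤ) ≠ 0)]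

/-- The transversal of `eℤ` consisting of `{ -r : 0 ≤ r < e }`. -/
def negT (e : ℕ) : Set (Multiplicative ℤ) :=
  {x | ∃ r : ℕ, r < e ∧ toAdd x = -(r : ℤ)}

lemma isComplement_negT (e : ℕ) (he : 0 < e) :
    Subgroup.IsComplement (dvdSubgroup e : Set (Multiplicative ℤ)) (negT e) := by
  rw [Subgroup.isComplement_iff_existsUnique]
  intro g
  set z : ℤ := toAdd g with hz
  have hepos : (0:ℤ) < e := by exact_mod_cast he
  have hmodlt : (-z) % e < e := Int.emod_lt_of_pos _ hepos
  have hmodnn : 0 ≤ (-z) % e := Int.emod_nonneg _ hepos.ne'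
  refine ⟨⟨⟨ofAdd (z + (-z) % e), ?_⟩,
      ⟨ofAdd (-((-z) % e)), ⟨((-z) % e).toNat, by omega, ?_⟩⟩⟩, ?_, ?_⟩
  · show (e:ℤ) ∣ toAdd (ofAdd (z + (-z) % e))
    rw [toAdd_ofAdd]
    have h : z + (-z) % e = -((e:ℤ) * ((-z) / e)) := by
      rw [Int.emod_def]; ring
    rw [h]
    exact (dvd_neg).2 (dvd_mul_right _ _)
  · rw [toAdd_ofAdd]; omega
  · show ofAdd (z + (-z) % e) * ofAdd (-((-z) % e)) = g
    rw [← ofAdd_add]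
    simp [hz]
  · rintro ⟨⟨x, hx⟩, ⟨y, ⟨r, hr, hy⟩⟩⟩ hxy
    have hxa : (e:ℤ) ∣ toAdd x := hx
    have hsum : toAdd x + toAdd y = z := by
      have := congrArg toAdd hxy
      simpa using this
    have h1 : toAdd y = -((-z) % e) := by
      obtain ⟨q, hq⟩ := hxa
      have hzeq : z = (e:ℤ) * q + -(r:ℤ) := by rw [← hsum, hq, hy]
      have hmod : (-z) % e = (r : ℤ) := by
        rw [hzeq]
        have h2 : -((e:ℤ) * q + -(r:ℤ)) = (r:ℤ) + (-q) * e := by ring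
        rw [h2, Int.add_mul_emod_self_right]
        exact Int.emod_eq_of_lt (by positivity) (by exact_mod_cast hr)
      rw [hy, hmod]
    have h2 : toAdd x = z + (-z) % e := by
      have h3 := hsum
      rw [h1] at h3
      linarith
    refine Prod.ext (Subtype.ext ?_) (Subtype.ext ?_)
    · exact toAdd.injective (by simpa using h2)
    · exact toAdd.injective (by simpa using h1)

open HNNExtension in
lemma chain'_triv {α : Type*} {R : α → α → Prop} (h : ∀ a b, R a b) :
    ∀ l : List α, l.Chain' R
  | [] => List.isChain_nil
  | [_] => List.isChain_singleton _
  | a :: b :: l => (List.isChain_cons_cons).2 ⟨h a b, chain'_triv h (b :: l)⟩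

open HNNExtension HNNExtension.NormalWord

/-- The transversal pair for the HNN model. -/
def bsTransversal (hc : 0 < c) (hd : 0 < d) :
    TransversalPair (Multiplicative ℤ) (dvdSubgroup c) (dvdSubgroup d) where
  set u := negT (if u = 1 then c else d)
  compl u := by
    rcases Int.units_eq_one_or u with rfl | rfl
    · simpa using isComplement_negT c hc
    · simpa using isComplement_negT d hd

/-- The HNN model of `BS(c,d)`. -/
abbrev HModel (hc : 0 < c) (hd : 0 < d) :=
  HNNExtension (Multiplicative ℤ) (dvdSubgroup c) (dvdSubgroup d) (bsEquiv c d hc hd)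

variable {c d} in
/-- The HNN-side analogue of `wordStem`. -/
def hword (hc : 0 < c) (hd : 0 < d) : List (Fin d) → HModel c d hc hd
  | [] => 1
  | i :: l => HNNExtension.of (ofAdd ((i : ℕ) : ℤ)) * HNNExtension.t * hword hc hd l

/-- The normal word representing `(hword n * of texp)⁻¹`. -/
def bsWord (hc : 0 < c) (hd : 0 < d) (n : List (Fin d)) (texp : ℕ) :
    NormalWord (bsTransversal c d hc hd) where
  head := ofAdd (-(texp : ℤ))
  toList := n.reverse.map (fun s : Fin d => ((-1 : ℤˣ), ofAdd (-(s.val : ℤ))))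
  mem_set := by
    intro u g hg
    rw [List.mem_map] at hg
    obtain ⟨s, _, hs⟩ := hg
    obtain ⟨rfl, rfl⟩ : u = -1 ∧ g = ofAdd (-(s.val : ℤ)) := by
      constructor
      · exact (Prod.mk.injEq _ _ _ _ ▸ hs).1.symm
      · exact (Prod.mk.injEq _ _ _ _ ▸ hs).2.symm
    show _ ∈ negT (if (-1 : ℤˣ) = 1 then c else d)
    rw [if_neg (by decide)]
    exact ⟨s, s.isLt, by simp⟩
  chain := by
    refine (List.isChain_map _).2 (chain'_triv ?_ _)
    intro a b _
    rfl

lemma bsWord_toList (hc : 0 < c) (hd : 0 < d) (n : List (Fin d)) (texp : ℕ) :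
    (bsWord c d hc hd n texp).toList
      = n.reverse.map (fun s : Fin d => ((-1 : ℤˣ), ofAdd (-(s.val : ℤ)))) := rfl

lemma bsWord_prod (hc : 0 < c) (hd : 0 < d) (n : List (Fin d)) (texp : ℕ) :
    (bsWord c d hc hd n texp).prod (bsEquiv c d hc hd)
      = (hword hc hd n * HNNExtension.of (ofAdd ((texp : ℕ) : ℤ)))⁻¹ := by
  induction n with
  | nil =>
      show HNNExtension.of (ofAdd (-(texp : ℤ))) * ([] : List _).prod = _
      simp [hword, ← map_inv]
  | cons i l ih =>
      show HNNExtension.of (ofAdd (-(texp : ℤ)))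
          * (((i :: l).reverse.map (fun s : Fin d => ((-1 : ℤˣ), ofAdd (-(s.val : ℤ))))).map
              (fun x => HNNExtension.t ^ ((x.1 : ℤˣ) : ℤ) * HNNExtension.of x.2)).prod = _
      rw [List.reverse_cons, List.map_append, List.map_append, List.prod_append,
        ← mul_assoc]
      have ihp := ih
      show (bsWord c d hc hd l texp).prod (bsEquiv c d hc hd)
          * ([(HNNExtension.t ^ (((-1 : ℤˣ) : ℤˣ) : ℤ)
              * HNNExtension.of (ofAdd (-(i.val : ℤ))))] : List _).prod = _
      rw [ihp]
      simp only [List.prod_cons, List.prod_nil, mul_one, hword]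
      rw [show (((-1 : ℤˣ) : ℤˣ) : ℤ) = -1 from rfl, zpow_neg_one]
      simp only [ofAdd_neg, map_inv, mul_inv_rev]
      group

lemma hword_mul_inj (hc : 0 < c) (hd : 0 < d) {n₁ n₂ : List (Fin d)} {t₁ t₂ : ℕ}
    (h : hword hc hd n₁ * HNNExtension.of (ofAdd ((t₁ : ℕ) : ℤ))
       = hword hc hd n₂ * HNNExtension.of (ofAdd ((t₂ : ℕ) : ℤ))) :
    n₁ = n₂ ∧ t₁ = t₂ := by
  have h2 : (bsWord c d hc hd n₁ t₁).prod (bsEquiv c d hc hd)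
      = (bsWord c d hc hd n₂ t₂).prod (bsEquiv c d hc hd) := by
    rw [bsWord_prod, bsWord_prod, h]
  have h3 := HNNExtension.NormalWord.prod_injective (φ := bsEquiv c d hc hd)
      (d := bsTransversal c d hc hd) h2
  have hhead : ofAdd (-(t₁ : ℤ)) = ofAdd (-(t₂ : ℤ)) :=
    congrArg (fun w : HNNExtension.NormalWord (bsTransversal c d hc hd) => w.head) h3
  have hlist := congrArg
    (fun w : HNNExtension.NormalWord (bsTransversal c d hc hd) => w.toList) h3
  simp only [bsWord_toList] at hlist
  constructor
  · have finj : Function.Injective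
        (fun s : Fin d => ((-1 : ℤˣ), ofAdd (-(s.val : ℤ)))) := by
      intro s s' hss
      have h5 := (Prod.mk.injEq _ _ _ _ ▸ hss).2
      have h4 : -(s.val : ℤ) = -(s'.val : ℤ) := by
        simpa using congrArg toAdd h5
      exact Fin.ext (by exact_mod_cast neg_injective h4)
    have := List.map_injective_iff.2 finj hlist
    exact List.reverse_injective this
  · have : -(t₁ : ℤ) = -(t₂ : ℤ) := by simpa using congrArg toAdd hhead
    exact_mod_cast neg_injective this

/-! ### Group-side lemmas -/

lemma arel : a c d * b c d ^ c = b c d ^ d * a c d := by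
  have hmem : (FreeGroup.of true * FreeGroup.of false ^ c
      * (FreeGroup.of false ^ d * FreeGroup.of true)⁻¹) ∈ rels c d := rfl
  have h1 : PresentedGroup.mk (rels c d) (FreeGroup.of true * FreeGroup.of false ^ c
      * (FreeGroup.of false ^ d * FreeGroup.of true)⁻¹) = 1 :=
    (QuotientGroup.eq_one_iff _).2 (Subgroup.subset_normalClosure hmem)
  rw [map_mul, map_mul, map_inv, map_mul, map_pow, map_pow] at h1
  exact mul_inv_eq_one.mp h1

lemma bpow_a (q : ℕ) : b c d ^ (d * q) * a c d = a c d * b c d ^ (c * q) := by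
  induction q with
  | zero => simp
  | succ q ih =>
      have : d * (q + 1) = d * q + d := by ring
      rw [this, pow_add, mul_assoc, ← arel, ← mul_assoc, ih]
      rw [show c * (q + 1) = c * q + c by ring, pow_add, mul_assoc]

lemma bt_a (t : ℕ) : b c d ^ t * a c d
    = b c d ^ (t % d) * a c d * b c d ^ (c * (t / d)) := by
  conv_lhs => rw [show t = t % d + d * (t / d) from (Nat.mod_add_div t d).symm]
  rw [pow_add, mul_assoc, bpow_a, ← mul_assoc]

lemma wordStem_append (l₁ l₂ : List (Fin d)) :
    wordStem c d (l₁ ++ l₂) = wordStem c d l₁ * wordStem c d l₂ := by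
  induction l₁ with
  | nil => simp [wordStem]
  | cons i l ih =>
      rw [List.cons_append, wordStem, wordStem, ih]
      simp [mul_assoc]

lemma key_mul (hd : 0 < d) (m : List (Fin d)) (s : ℕ) :
    ∀ (n : List (Fin d)) (t : ℕ), ∃ (n' : List (Fin d)) (t' : ℕ),
      (wordStem c d n * b c d ^ t) * (wordStem c d m * b c d ^ s)
        = wordStem c d n' * b c d ^ t' := by
  induction m with
  | nil =>
      intro n t
      refine ⟨n, t + s, ?_⟩
      show wordStem c d n * b c d ^ t * (1 * b c d ^ s) = _
      rw [one_mul, pow_add, mul_assoc]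
  | cons i m ih =>
      intro n t
      obtain ⟨n', t', h⟩ := ih (n ++ [⟨(t + (i : ℕ)) % d, Nat.mod_lt _ hd⟩])
        (c * ((t + (i : ℕ)) / d))
      refine ⟨n', t', ?_⟩
      rw [← h]
      show wordStem c d n * b c d ^ t
          * (b c d ^ (i : ℕ) * a c d * wordStem c d m * b c d ^ s) = _
      rw [wordStem_append]
      show _ = wordStem c d n * (b c d ^ ((t + (i : ℕ)) % d) * a c d * 1)
          * b c d ^ (c * ((t + (i : ℕ)) / d)) * (wordStem c d m * b c d ^ s)
      rw [mul_one]
      have hba : b c d ^ t * b c d ^ (i : ℕ) * a c d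
          = b c d ^ ((t + (i : ℕ)) % d) * a c d * b c d ^ (c * ((t + (i : ℕ)) / d)) := by
        rw [← pow_add, bt_a]
      calc wordStem c d n * b c d ^ t
            * (b c d ^ (i : ℕ) * a c d * wordStem c d m * b c d ^ s)
            = wordStem c d n * (b c d ^ t * b c d ^ (i : ℕ) * a c d)
              * (wordStem c d m * b c d ^ s) := by
              simp only [mul_assoc]
          _ = _ := by rw [hba]; simp only [mul_assoc]

lemma exists_nf (hd : 0 < d) (x : Grp c d) (hx : x ∈ P c d) :
    ∃ (n : List (Fin d)) (t : ℕ), x = wordStem c d n * b c d ^ t := by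
  induction hx using Submonoid.closure_induction with
  | mem x hx =>
      rcases hx with rfl | rfl
      · refine ⟨[⟨0, hd⟩], 0, ?_⟩
        show a c d = b c d ^ (0:ℕ) * a c d * 1 * b c d ^ (0:ℕ)
        simp
      · exact ⟨[], 1, by show b c d = 1 * b c d ^ (1:ℕ); simp⟩
  | one => exact ⟨[], 0, by show (1 : Grp c d) = 1 * b c d ^ (0:ℕ); simp⟩
  | mul x y _ _ ihx ihy =>
      obtain ⟨n₁, t₁, rfl⟩ := ihx
      obtain ⟨n₂, t₂, rfl⟩ := ihy
      exact key_mul c d hd n₂ t₂ n₁ t₁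

/-- The homomorphism from `BS(c,d)` to its HNN model. -/
def psi (hc : 0 < c) (hd : 0 < d) : Grp c d →* HModel c d hc hd := by
  refine PresentedGroup.toGroup
    (f := fun x : Bool => if x then HNNExtension.t else HNNExtension.of (ofAdd (1:ℤ))) ?_
  intro r hr
  rw [rels, Set.mem_singleton_iff] at hr
  subst hr
  rw [map_mul, map_mul, map_inv, map_mul, map_pow, map_pow, FreeGroup.lift_apply_of, FreeGroup.lift_apply_of]
  simp only [if_true, if_false, Bool.false_eq_true]
  have hofpow : ∀ n : ℕ, (HNNExtension.of (G := Multiplicative ℤ)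
      (A := dvdSubgroup c) (B := dvdSubgroup d) (φ := bsEquiv c d hc hd)
      (ofAdd (1:ℤ))) ^ n = HNNExtension.of (ofAdd ((n : ℕ) : ℤ)) := by
    intro n
    rw [← map_pow]
    congr 1
    apply toAdd.injective
    simp [toAdd_pow]
  rw [hofpow, hofpow, mul_inv_eq_one]
  have hkey := HNNExtension.t_mul_of (φ := bsEquiv c d hc hd)
    ⟨ofAdd ((c:ℤ) * 1), dvd_mul_right _ _⟩
  rw [bsEquiv_apply] at hkey
  simpa using hkey

lemma psi_a (hc : 0 < c) (hd : 0 < d) : psi c d hc hd (a c d) = HNNExtension.t :=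
  PresentedGroup.toGroup.of _

lemma psi_b (hc : 0 < c) (hd : 0 < d) :
    psi c d hc hd (b c d) = HNNExtension.of (ofAdd (1:ℤ)) :=
  PresentedGroup.toGroup.of _

lemma psi_b_pow (hc : 0 < c) (hd : 0 < d) (n : ℕ) :
    psi c d hc hd (b c d ^ n) = HNNExtension.of (ofAdd ((n : ℕ) : ℤ)) := by
  rw [map_pow, psi_b, ← map_pow]
  congr 1
  apply toAdd.injective
  simp [toAdd_pow]

lemma psi_wordStem (hc : 0 < c) (hd : 0 < d) (n : List (Fin d)) :
    psi c d hc hd (wordStem c d n) = hword hc hd n := by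
  induction n with
  | nil => exact map_one _
  | cons i l ih =>
      rw [wordStem, hword, map_mul, map_mul, psi_a, psi_b_pow, ih]

lemma nf_unique (hc : 0 < c) (hd : 0 < d) {n₁ n₂ : List (Fin d)} {t₁ t₂ : ℕ}
    (h : wordStem c d n₁ * b c d ^ t₁ = wordStem c d n₂ * b c d ^ t₂) :
    n₁ = n₂ ∧ t₁ = t₂ := by
  apply hword_mul_inj c d hc hd
  have h2 := congrArg (psi c d hc hd) h
  rw [map_mul, map_mul, psi_wordStem, psi_wordStem, psi_b_pow, psi_b_pow] at h2
  exact h2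

lemma stem_sep (hc : 0 < c) (hd : 0 < d) {l₁ l₂ : List (Fin d)}
    (hlen : l₁.length = l₂.length) (hne : wordStem c d l₁ ≠ wordStem c d l₂)
    {z y : Grp c d} (hz : z ∈ P c d) (hy : y ∈ P c d) :
    wordStem c d l₁ * z ≠ wordStem c d l₂ * y := by
  intro h
  obtain ⟨m₁, s₁, rfl⟩ := exists_nf c d hd z hz
  obtain ⟨m₂, s₂, rfl⟩ := exists_nf c d hd y hy
  rw [← mul_assoc, ← mul_assoc, ← wordStem_append, ← wordStem_append] at h
  obtain ⟨happ, -⟩ := nf_unique c d hc hd h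
  obtain ⟨hl, -⟩ := List.append_inj happ hlen
  exact hne (by rw [hl])

open ContinuousLinearMap in
lemma ortho_aux (ι : Type*) [Monoid ι] [DecidableEq ι] (σ τ : ι)
    (T : ι → (lp (fun _ : ι => ℂ) 2 →L[ℂ] lp (fun _ : ι => ℂ) 2))
    (hT : ∀ x y : ι, T x (lp.single 2 y 1) = lp.single 2 (x*y) 1)
    (hsep : ∀ z y : ι, σ * z ≠ τ * y) : adjoint (T σ) * T τ = 0 := by
  have hbasis : ∀ y : ι, adjoint (T σ) (T τ (lp.single 2 y 1)) = 0 := by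
    intro y
    rw [hT]
    apply lp.ext
    funext z
    have h1 : inner (𝕜 := ℂ) (lp.single 2 z (1:ℂ))
        (adjoint (T σ) (lp.single 2 (τ * y) 1))
        = (adjoint (T σ) (lp.single 2 (τ * y) 1) : lp (fun _ : ι => ℂ) 2) z := by
      rw [lp.inner_single_left]
      simp
    rw [adjoint_inner_right, hT, lp.inner_single_left,
      lp.single_apply, Pi.single_eq_of_ne (hsep z y)] at h1
    show (adjoint (T σ) (lp.single 2 (τ * y) 1) : lp (fun _ : ι => ℂ) 2) z
        = (0 : lp (fun _ : ι => ℂ) 2) z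
    rw [← h1]
    simp
  refine ContinuousLinearMap.ext fun f => ?_
  rw [ContinuousLinearMap.mul_apply, ContinuousLinearMap.zero_apply]
  have h1 : HasSum (fun y : ι => lp.single 2 y (f y)) f :=
    lp.hasSum_single (by norm_num) f
  have h2 := h1.mapL ((adjoint (T σ)).comp (T τ))
  have h3 : ∀ y : ι, ((adjoint (T σ)).comp (T τ)) (lp.single 2 y (f y)) = 0 := by
    intro y
    have hsm : lp.single (E := fun _ : ι => ℂ) 2 y (f y) = (f y : ℂ) • lp.single 2 y (1:ℂ) := by
      rw [← lp.single_smul]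
      norm_num
    rw [ContinuousLinearMap.comp_apply, hsm, map_smul, map_smul, hbasis y, smul_zero]
  rw [funext h3] at h2
  have h4 := h2.unique hasSum_zero
  simpa using h4

open ContinuousLinearMap in
/-- For every k ≥ 1 and all distinct stems σ, τ ∈ Σ_k (given by digit strings l₁, l₂ of
length k), the operators T_σ and T_τ on ℓ²(P) have orthogonal ranges: (T_σ)* T_τ = 0. -/
theorem statement10 (c d : ℕ) (hc : 0 < c) (hd : 0 < d)
    (T : P c d → (l2P c d →L[ℂ] l2P c d))
    (hT : ∀ x y : P c d, T x (lp.single 2 y 1) = lp.single 2 (x * y) 1)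
    (k : ℕ) (hk : 1 ≤ k) (l₁ l₂ : List (Fin d))
    (h₁ : l₁.length = k) (h₂ : l₂.length = k)
    (hne : wordStem c d l₁ ≠ wordStem c d l₂) :
    adjoint (T ⟨wordStem c d l₁, wordStem_mem_P c d l₁⟩)
        * T ⟨wordStem c d l₂, wordStem_mem_P c d l₂⟩ = 0 := by
  apply ortho_aux (P c d) _ _ T hT
  intro z y h
  refine stem_sep c d hc hd (h₁.trans h₂.symm) hne z.2 y.2 ?_
  simpa using congrArg Subtype.val h

end BSpaper
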